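/- arXiv:1801.10570 — 2 statements merged into one kernel-verified Lean document; each statement's English description precedes it below -/
import Mathlib

section
/- Let N be a positive natural number, let a₁ ≥ a₂ ≥ ... ≥ aₙ ≥ 0 and 0 = b₀ < b₁ < ... < b_N be real numbers, and let s ≥ 1. Then (∑_{j=1}^N a_j^s (b_j^s − b_{j−1}^s))^{1/s} ≤ ∑_{j=1}^N a_j (b_j − b_{j−1}). -/
open MeasureTheory ENNReal Set

/-- Distribution function of an `ℝ≥0∞`-valued function. -/
noncomputable def distFn {X : Type*} [MeasurableSpace X] (μ : Measure X)
    (g : X → ℝ≥0∞) (s : ℝ≥0∞) : ℝ≥0∞ :=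
  μ {x | s < g x}

/-- Nonincreasing rearrangement. -/
noncomputable def rearr {X : Type*} [MeasurableSpace X] (μ : Measure X)
    (g : X → ℝ≥0∞) (t : ℝ) : ℝ≥0∞ :=
  sInf {s : ℝ≥0∞ | distFn μ g s ≤ ENNReal.ofReal t}

/-- The `ℝ≥0∞`-valued absolute value of a real function. -/
noncomputable def eAbs {X : Type*} (f : X → ℝ) : X → ℝ≥0∞ := fun x => ENNReal.ofReal |f x|

/-- Lorentz quasi-norm via the rearrangement, finite secondary exponent `r`. -/
noncomputable def lorentzR {X : Type*} [MeasurableSpace X] (μ : Measure X)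
    (g : X → ℝ≥0∞) (p r : ℝ) : ℝ≥0∞ :=
  (ENNReal.ofReal (r / p) *
      ∫⁻ t in Ioi (0 : ℝ),
        (ENNReal.ofReal t ^ (1 / p) * rearr μ g t) ^ r * ENNReal.ofReal t⁻¹) ^ (1 / r)

/-- Lorentz quasi-norm via the rearrangement, `r = ∞`. -/
noncomputable def lorentzTop {X : Type*} [MeasurableSpace X] (μ : Measure X)
    (g : X → ℝ≥0∞) (p : ℝ) : ℝ≥0∞ :=
  ⨆ t ∈ Ioi (0 : ℝ), ENNReal.ofReal t ^ (1 / p) * rearr μ g t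

/-- Lorentz quasi-norm via the rearrangement, `0 < r ≤ ∞`. -/
noncomputable def lorentz {X : Type*} [MeasurableSpace X] (μ : Measure X)
    (g : X → ℝ≥0∞) (p : ℝ) (r : ℝ≥0∞) : ℝ≥0∞ :=
  if r = ∞ then lorentzTop μ g p else lorentzR μ g p r.toReal

/-- Lorentz quasi-norm via the distribution function, finite secondary exponent `r`. -/
noncomputable def lorentzD {X : Type*} [MeasurableSpace X] (μ : Measure X)
    (g : X → ℝ≥0∞) (p r : ℝ) : ℝ≥0∞ :=
  (ENNReal.ofReal r *
      ∫⁻ a in Ioi (0 : ℝ),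
        (distFn μ g (ENNReal.ofReal a) ^ (1 / p) * ENNReal.ofReal a) ^ r *
          ENNReal.ofReal a⁻¹) ^ (1 / r)

/-- Weak-type Lorentz quasi-norm via the distribution function. -/
noncomputable def lorentzDTop {X : Type*} [MeasurableSpace X] (μ : Measure X)
    (g : X → ℝ≥0∞) (p : ℝ) : ℝ≥0∞ :=
  ⨆ a ∈ Ioi (0 : ℝ), ENNReal.ofReal a * distFn μ g (ENNReal.ofReal a) ^ (1 / p)

/-- Lorentz quasi-norm via the distribution function, `0 < r ≤ ∞`. -/
noncomputable def lorentzDE {X : Type*} [MeasurableSpace X] (μ : Measure X)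
    (g : X → ℝ≥0∞) (p : ℝ) (r : ℝ≥0∞) : ℝ≥0∞ :=
  if r = ∞ then lorentzDTop μ g p else lorentzD μ g p r.toReal

/-- A measure is nonatomic if every set of positive measure has a subset of
strictly smaller positive measure. -/
def Nonatomic {X : Type*} [MeasurableSpace X] (μ : Measure X) : Prop :=
  ∀ s : Set X, MeasurableSet s → 0 < μ s →
    ∃ t, t ⊆ s ∧ MeasurableSet t ∧ 0 < μ t ∧ μ t < μ s

/-- The `ℓ^r` norm of a sequence of extended nonnegative reals, `0 < r ≤ ∞`. -/
noncomputable def ellr {ι : Type*} (r : ℝ≥0∞) (c : ι → ℝ≥0∞) : ℝ≥0∞ :=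
  if r = ∞ then ⨆ k, c k else (∑' k, c k ^ r.toReal) ^ (1 / r.toReal)

lemma key_slope {s : ℝ} (hs : 1 ≤ s) {u v c : ℝ} (hu : 0 ≤ u) (huv : u ≤ v) (hc : 0 ≤ c) :
    (u + c) ^ s - u ^ s ≤ (v + c) ^ s - v ^ s := by
  rcases eq_or_lt_of_le hc with rfl | hc
  · simp
  rcases eq_or_lt_of_le huv with rfl | huv
  · exact le_refl _
  have hv : 0 ≤ v := hu.trans huv.le
  have hcf := convexOn_rpow hs
  have mem : ∀ x : ℝ, 0 ≤ x → x ∈ Set.Ici (0:ℝ) := fun x hx => hx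
  -- slope(u, u+c) ≤ slope(u, v+c)
  have h1 : ((u+c)^s - u^s) / ((u+c) - u) ≤ ((v+c)^s - u^s) / ((v+c) - u) := by
    exact hcf.secant_mono (mem u hu) (mem _ (by linarith)) (mem _ (by linarith))
      (by linarith) (by linarith) (by linarith)
  -- slope(u, v+c) ≤ slope(v, v+c)
  have h2 : (u^s - (v+c)^s) / (u - (v+c)) ≤ (v^s - (v+c)^s) / (v - (v+c)) := by
    exact hcf.secant_mono (mem _ (by linarith)) (mem u hu) (mem v hv)
      (by linarith) (by linarith) (by linarith)
  have e2 : (u^s - (v+c)^s) / (u - (v+c)) = ((v+c)^s - u^s) / ((v+c) - u) := by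
    rw [← neg_div_neg_eq]; ring_nf
  have e3 : (v^s - (v+c)^s) / (v - (v+c)) = ((v+c)^s - v^s) / ((v+c) - v) := by
    rw [← neg_div_neg_eq]; ring_nf
  rw [e2, e3] at h2
  have h3 := h1.trans h2
  have hc' : (u+c) - u = c := by ring
  have hc'' : (v+c) - v = c := by ring
  rw [hc'] at h3; rw [hc''] at h3
  calc (u+c)^s - u^s = (((u+c)^s - u^s)/c) * c := by field_simp
    _ ≤ (((v+c)^s - v^s)/c) * c := by
        exact mul_le_mul_of_nonneg_right h3 hc.le
    _ = (v+c)^s - v^s := by field_simp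

lemma telescope (b : ℕ → ℝ) (n : ℕ) :
    ∑ j ∈ Finset.Icc 1 n, (b j - b (j - 1)) = b n - b 0 := by
  induction n with
  | zero => simp
  | succ n ih => rw [Finset.sum_Icc_succ_top (by omega), ih]; simp

lemma main_aux (N : ℕ) (a b : ℕ → ℝ) (s : ℝ) (hs : 1 ≤ s)
    (ha_nonneg : ∀ j, 1 ≤ j → j ≤ N → 0 ≤ a j)
    (ha_anti : ∀ i j, 1 ≤ i → i ≤ j → j ≤ N → a j ≤ a i)
    (hb0 : b 0 = 0)
    (hb_mono : ∀ i j, i < j → j ≤ N → b i < b j) :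
    ∀ n, 1 ≤ n → n ≤ N →
      (∑ j ∈ Finset.Icc 1 n, a j ^ s * (b j ^ s - b (j - 1) ^ s))
        ≤ (∑ j ∈ Finset.Icc 1 n, a j * (b j - b (j - 1))) ^ s := by
  have hbnn : ∀ j, j ≤ N → 0 ≤ b j := by
    intro j hj
    rcases Nat.eq_zero_or_pos j with rfl | hj1
    · simp [hb0]
    · exact le_of_lt (hb0 ▸ hb_mono 0 j hj1 hj)
  intro n
  induction n with
  | zero => omega
  | succ n ih =>
    intro _ hnN
    rcases Nat.eq_zero_or_pos n with rfl | hn1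
    · -- base case n+1 = 1
      simp only [Finset.Icc_self, Finset.sum_singleton]
      norm_num [hb0]
      rw [Real.zero_rpow (by linarith), Real.mul_rpow (ha_nonneg 1 le_rfl hnN) (hbnn 1 hnN)]
      simp
    · have hn : n ≤ N := by omega
      have IH := ih hn1 hn
      set S := ∑ j ∈ Finset.Icc 1 n, a j * (b j - b (j - 1)) with hS
      have han1 : 0 ≤ a (n+1) := ha_nonneg _ (by omega) hnN
      have hbn : 0 ≤ b n := hbnn n hn
      have hlow : a (n+1) * b n ≤ S := by
        calc a (n+1) * b n = ∑ j ∈ Finset.Icc 1 n, a (n+1) * (b j - b (j-1)) := by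
              rw [← Finset.mul_sum, telescope, hb0]; ring
          _ ≤ S := by
              apply Finset.sum_le_sum
              intro j hj
              simp only [Finset.mem_Icc] at hj
              have hbj : b (j - 1) ≤ b j := le_of_lt (hb_mono (j-1) j (by omega) (by omega))
              exact mul_le_mul_of_nonneg_right
                (ha_anti j (n+1) hj.1 (by omega) hnN) (by linarith)
      have hkey := key_slope (c := a (n+1) * (b (n+1) - b n)) hs (mul_nonneg han1 hbn) hlow
        (mul_nonneg han1 (by
          have := hb_mono n (n+1) (by omega) hnN; linarith))
      have hdist : a (n+1) * b n + a (n+1) * (b (n+1) - b n) = a (n+1) * b (n+1) := by ring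
      rw [hdist] at hkey
      have hmr : ∀ x, 0 ≤ x → (a (n+1) * x) ^ s = a (n+1) ^ s * x ^ s := fun x hx =>
        Real.mul_rpow han1 hx
      rw [Finset.sum_Icc_succ_top (by omega), Finset.sum_Icc_succ_top (by omega)]
      simp only [Nat.add_sub_cancel]
      calc (∑ j ∈ Finset.Icc 1 n, a j ^ s * (b j ^ s - b (j-1) ^ s))
            + a (n+1) ^ s * (b (n+1) ^ s - b n ^ s)
          ≤ S ^ s + (a (n+1) ^ s * b (n+1) ^ s - a (n+1) ^ s * b n ^ s) := by
            rw [mul_sub]; exact add_le_add IH le_rfl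
        _ = S ^ s + ((a (n+1) * b (n+1)) ^ s - (a (n+1) * b n) ^ s) := by
            rw [hmr _ (hbnn _ hnN), hmr _ hbn]
        _ ≤ S ^ s + ((S + a (n+1) * (b (n+1) - b n)) ^ s - S ^ s) := by
            exact add_le_add le_rfl (by linarith)
        _ = (S + a (n+1) * (b (n+1) - b n)) ^ s := by ring

theorem stmt1 (N : ℕ) (hN : 1 ≤ N) (a b : ℕ → ℝ) (s : ℝ) (hs : 1 ≤ s)
    (ha_nonneg : ∀ j, 1 ≤ j → j ≤ N → 0 ≤ a j)
    (ha_anti : ∀ i j, 1 ≤ i → i ≤ j → j ≤ N → a j ≤ a i)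
    (hb0 : b 0 = 0)
    (hb_mono : ∀ i j, i < j → j ≤ N → b i < b j) :
    (∑ j ∈ Finset.Icc 1 N, a j ^ s * (b j ^ s - b (j - 1) ^ s)) ^ (1 / s)
      ≤ ∑ j ∈ Finset.Icc 1 N, a j * (b j - b (j - 1)) := by
  have hbnn : ∀ j, j ≤ N → 0 ≤ b j := by
    intro j hj
    rcases Nat.eq_zero_or_pos j with rfl | hj1
    · simp [hb0]
    · exact le_of_lt (hb0 ▸ hb_mono 0 j hj1 hj)
  have hmain := main_aux N a b s hs ha_nonneg ha_anti hb0 hb_mono N hN le_rfl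
  have hLnn : 0 ≤ ∑ j ∈ Finset.Icc 1 N, a j ^ s * (b j ^ s - b (j - 1) ^ s) := by
    apply Finset.sum_nonneg
    intro j hj
    simp only [Finset.mem_Icc] at hj
    have h1 : b (j - 1) ≤ b j := le_of_lt (hb_mono (j-1) j (by omega) hj.2)
    have h2 : b (j-1) ^ s ≤ b j ^ s :=
      Real.rpow_le_rpow (hbnn (j-1) (by omega)) h1 (by linarith)
    exact mul_nonneg (Real.rpow_nonneg (ha_nonneg j hj.1 hj.2) s) (by linarith)
  have hRnn : 0 ≤ ∑ j ∈ Finset.Icc 1 N, a j * (b j - b (j - 1)) := by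
    apply Finset.sum_nonneg
    intro j hj
    simp only [Finset.mem_Icc] at hj
    have h1 : b (j - 1) ≤ b j := le_of_lt (hb_mono (j-1) j (by omega) hj.2)
    exact mul_nonneg (ha_nonneg j hj.1 hj.2) (by linarith)
  have hs0 : s ≠ 0 := by linarith
  calc (∑ j ∈ Finset.Icc 1 N, a j ^ s * (b j ^ s - b (j - 1) ^ s)) ^ (1 / s)
      ≤ ((∑ j ∈ Finset.Icc 1 N, a j * (b j - b (j - 1))) ^ s) ^ (1 / s) :=
        Real.rpow_le_rpow hLnn hmain (by positivity)
    _ = ∑ j ∈ Finset.Icc 1 N, a j * (b j - b (j - 1)) := by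
        rw [one_div, Real.rpow_rpow_inv hRnn hs0]
end

section
/- Let b > 0, ρ > 1, 0 < p < ∞, 0 < r ≤ ∞, and let (A_j)_{j∈Z} with Z ⊆ ℤ be measurable sets with μ(A_j) ≥ b ρ^j. Let β : Z → [0,∞) with β ∈ ℓ^r. If |f(x)| ≥ ∑_{j∈Z} β(j) ρ^{−j/p} 1_{A_j}(x) almost everywhere, then ‖f‖_{L^{p,r}} ≥ c (∑_{j∈Z} β(j)^r)^{1/r}, for a constant c depending only on p, r, b, ρ. -/
open MeasureTheory ENNReal Set

lemma rearr_lb {X : Type*} [MeasurableSpace X] (μ : Measure X)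
    (Z : Set ℤ) (A : ℤ → Set X) (β : ℤ → ℝ) (f : X → ℝ)
    (b ρ p : ℝ) (hb : 0 < b) (hρ : 1 < ρ)
    (hZ : ∀ j ∉ Z, β j = 0)
    (hA : ∀ j ∈ Z, ENNReal.ofReal (b * ρ ^ j) ≤ μ (A j))
    (hae : ∀ᵐ x ∂μ, ∑' j : ℤ, ENNReal.ofReal (β j * ρ ^ (-(j : ℝ) / p)) *
        (A j).indicator (fun _ => (1 : ℝ≥0∞)) x ≤ eAbs f x)
    (j : ℤ) (t : ℝ) (ht : t < b * ρ ^ j) :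
    ENNReal.ofReal (β j * ρ ^ (-(j : ℝ) / p)) ≤ rearr μ (eAbs f) t := by
  by_cases hβj : β j = 0
  · simp [hβj]
  have hjZ : j ∈ Z := by
    by_contra h
    exact hβj (hZ j h)
  set v := ENNReal.ofReal (β j * ρ ^ (-(j : ℝ) / p)) with hv
  refine le_sInf fun s hs => ?_
  by_contra hvs
  push_neg at hvs
  have hsub : A j ≤ᵐ[μ] {x | s < eAbs f x} := by
    filter_upwards [hae] with x hx hxA
    have h1 : v ≤ ∑' i : ℤ, ENNReal.ofReal (β i * ρ ^ (-(i : ℝ) / p)) *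
        (A i).indicator (fun _ => (1 : ℝ≥0∞)) x := by
      have h2 := ENNReal.le_tsum (f := fun i : ℤ => ENNReal.ofReal (β i * ρ ^ (-(i : ℝ) / p)) *
        (A i).indicator (fun _ => (1 : ℝ≥0∞)) x) j
      simpa [Set.indicator_of_mem hxA] using h2
    exact lt_of_lt_of_le hvs (h1.trans hx)
  have h3 : ENNReal.ofReal (b * ρ ^ j) ≤ distFn μ (eAbs f) s :=
    (hA j hjZ).trans (measure_mono_ae hsub)
  have hpos : (0:ℝ) < b * ρ ^ j := mul_pos hb (zpow_pos (lt_trans one_pos hρ) j)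
  have h4 : ENNReal.ofReal t < distFn μ (eAbs f) s :=
    lt_of_lt_of_le ((ENNReal.ofReal_lt_ofReal_iff hpos).mpr ht) h3
  exact absurd hs (not_le.mpr h4)

theorem stmt16 (b ρ p : ℝ) (r : ℝ≥0∞)
    (hb : 0 < b) (hρ : 1 < ρ) (hp : 0 < p) (hr : 0 < r) :
    ∃ c : ℝ, 0 < c ∧
      ∀ {X : Type*} [MeasurableSpace X] (μ : Measure X)
        (Z : Set ℤ) (A : ℤ → Set X) (β : ℤ → ℝ) (f : X → ℝ),
        Measurable f → (∀ j, MeasurableSet (A j)) → (∀ j, 0 ≤ β j) →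
        (∀ j ∉ Z, β j = 0) →
        (∀ j ∈ Z, ENNReal.ofReal (b * ρ ^ j) ≤ μ (A j)) →
        (∀ᵐ x ∂μ,
          ∑' j : ℤ, ENNReal.ofReal (β j * ρ ^ (-(j : ℝ) / p)) *
              (A j).indicator (fun _ => (1 : ℝ≥0∞)) x ≤ eAbs f x) →
        ENNReal.ofReal c * ellr r (fun j => ENNReal.ofReal (β j))
          ≤ lorentz μ (eAbs f) p r := by
  have hρ0 : (0:ℝ) < ρ := lt_trans one_pos hρ
  set C : ℝ := (b / ρ) ^ (1 / p) with hCdef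
  have hC : 0 < C := Real.rpow_pos_of_pos (div_pos hb hρ0) _
  -- key real identity
  have key : ∀ (j : ℤ) (u : ℝ), (b * ρ ^ (j-1)) ^ (1/p) * (u * ρ ^ (-(j:ℝ)/p)) = C * u := by
    intro j u
    have h1 : b * ρ ^ (j-1) = (b / ρ) * ρ ^ (j:ℤ) := by
      rw [zpow_sub_one₀ hρ0.ne']; ring
    rw [h1, Real.mul_rpow (by positivity) (by positivity)]
    have h2 : ((ρ:ℝ) ^ (j:ℤ)) ^ (1/p : ℝ) = ρ ^ ((j:ℝ)/p) := by
      rw [← Real.rpow_intCast ρ j, ← Real.rpow_mul hρ0.le]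
      ring_nf
    rw [h2]
    have h3 : ρ ^ ((j:ℝ)/p) * ρ ^ (-(j:ℝ)/p) = 1 := by
      rw [← Real.rpow_add hρ0]
      have : (j:ℝ)/p + -(j:ℝ)/p = 0 := by ring
      rw [this, Real.rpow_zero]
    calc (b/ρ) ^ (1/p:ℝ) * ρ ^ ((j:ℝ)/p) * (u * ρ ^ (-(j:ℝ)/p))
        = (b/ρ) ^ (1/p:ℝ) * u * (ρ ^ ((j:ℝ)/p) * ρ ^ (-(j:ℝ)/p)) := by ring
      _ = C * u := by rw [h3, mul_one]
  by_cases hrtop : r = ∞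
  · -- case r = ∞
    refine ⟨C, hC, ?_⟩
    intro X _ μ Z A β f hf hAm hβ hZ hA hae
    simp only [lorentz, ellr, hrtop, if_true, reduceIte]
    rw [ENNReal.mul_iSup]
    refine iSup_le fun j => ?_
    set t : ℝ := b * ρ ^ (j-1) with htdef
    have ht0 : 0 < t := mul_pos hb (zpow_pos hρ0 _)
    have htlt : t < b * ρ ^ j :=
      mul_lt_mul_of_pos_left (zpow_lt_zpow_right₀ hρ (by omega)) hb
    refine le_trans ?_ (le_biSup _ (show t ∈ Ioi (0:ℝ) from ht0))
    have h5 : ENNReal.ofReal C * ENNReal.ofReal (β j)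
        = ENNReal.ofReal (t ^ (1/p)) * ENNReal.ofReal (β j * ρ ^ (-(j:ℝ)/p)) := by
      rw [← ENNReal.ofReal_mul hC.le, ← ENNReal.ofReal_mul (by positivity), key j (β j)]
    rw [h5]
    exact mul_le_mul' (le_of_eq (ENNReal.ofReal_rpow_of_pos ht0).symm)
      (rearr_lb μ Z A β f b ρ p hb hρ hZ hA hae j t htlt)
  · -- case r finite
    set r' : ℝ := r.toReal with hr'def
    have hr' : 0 < r' := ENNReal.toReal_pos hr.ne' hrtop
    set L : ℝ := 1 - ρ⁻¹ with hLdef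
    have hL : 0 < L := by
      have h : ρ⁻¹ < 1 := inv_lt_one_of_one_lt₀ hρ
      rw [hLdef]; linarith
    set D : ℝ := ((r'/p) * L) ^ (1/r') with hDdef
    have hD : 0 < D := Real.rpow_pos_of_pos (mul_pos (div_pos hr' hp) hL) _
    refine ⟨C * D, mul_pos hC hD, ?_⟩
    intro X _ μ Z A β f hf hAm hβ hZ hA hae
    simp only [lorentz, ellr, hrtop, if_false, ← hr'def]
    set g := eAbs f with hg
    set a : ℤ → ℝ := fun j => b * ρ ^ j with hadef
    have ha0 : ∀ j, 0 < a j := fun j => mul_pos hb (zpow_pos hρ0 _)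
    have hamono : StrictMono a := fun i j hij =>
      mul_lt_mul_of_pos_left (zpow_lt_zpow_right₀ hρ hij) hb
    set S : ℤ → Set ℝ := fun j => Ioo (a (j-1)) (a j) with hSdef
    set F : ℝ → ℝ≥0∞ := fun t =>
      (ENNReal.ofReal t ^ (1/p) * rearr μ g t) ^ r' * ENNReal.ofReal t⁻¹ with hFdef
    -- per-interval bound
    have step1 : ∀ j : ℤ, ENNReal.ofReal ((C * β j) ^ r') * ENNReal.ofReal L
        ≤ ∫⁻ t in S j, F t := by
      intro j
      have hlow : ∀ t ∈ S j,
          ENNReal.ofReal ((C * β j) ^ r') * ENNReal.ofReal (a j)⁻¹ ≤ F t := by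
        intro t ht
        have ht0 : 0 < t := lt_trans (ha0 _) ht.1
        have hfac1 : ENNReal.ofReal ((C * β j) ^ r')
            ≤ (ENNReal.ofReal t ^ (1/p) * rearr μ g t) ^ r' := by
          rw [← ENNReal.ofReal_rpow_of_nonneg (mul_nonneg hC.le (hβ j)) hr'.le]
          refine ENNReal.rpow_le_rpow ?_ hr'.le
          have e1 : ENNReal.ofReal (C * β j)
              = ENNReal.ofReal ((a (j-1)) ^ (1/p)) * ENNReal.ofReal (β j * ρ ^ (-(j:ℝ)/p)) := by
            rw [← ENNReal.ofReal_mul (by positivity), key j (β j)]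
          rw [e1]
          refine mul_le_mul' ?_ (rearr_lb μ Z A β f b ρ p hb hρ hZ hA hae j t ht.2)
          rw [ENNReal.ofReal_rpow_of_pos ht0]
          exact ENNReal.ofReal_le_ofReal
            (Real.rpow_le_rpow (ha0 _).le ht.1.le (by positivity))
        have hfac2 : ENNReal.ofReal (a j)⁻¹ ≤ ENNReal.ofReal t⁻¹ :=
          ENNReal.ofReal_le_ofReal (inv_anti₀ ht0 ht.2.le)
        exact mul_le_mul' hfac1 hfac2
      calc ENNReal.ofReal ((C * β j) ^ r') * ENNReal.ofReal L
          = ENNReal.ofReal ((C * β j) ^ r') * ENNReal.ofReal (a j)⁻¹ * volume (S j) := by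
            rw [hSdef]
            simp only [Real.volume_Ioo, mul_assoc, ← ENNReal.ofReal_mul (by positivity : (0:ℝ) ≤ (a j)⁻¹)]
            congr 2
            have haj : a (j-1) = a j * ρ⁻¹ := by
              simp only [hadef]
              rw [zpow_sub_one₀ hρ0.ne']
              ring
            rw [haj, hLdef]
            calc (1:ℝ) - ρ⁻¹ = (a j)⁻¹ * a j * (1 - ρ⁻¹) := by
                  rw [inv_mul_cancel₀ (ha0 j).ne', one_mul]
              _ = (a j)⁻¹ * (a j - a j * ρ⁻¹) := by ring
        _ = ∫⁻ _ in S j, (ENNReal.ofReal ((C * β j) ^ r') * ENNReal.ofReal (a j)⁻¹) := by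
            rw [setLIntegral_const]
        _ ≤ ∫⁻ t in S j, F t := setLIntegral_mono' measurableSet_Ioo hlow
    -- sum over j
    have hdisj : Pairwise (Function.onFun Disjoint S) := by
      have hd : ∀ i j : ℤ, i < j → Disjoint (S i) (S j) := by
        intro i j hij
        rw [Set.disjoint_left]
        intro x hx1 hx2
        have : a i ≤ a (j-1) := hamono.monotone (by omega)
        have := hx1.2
        have := hx2.1
        simp only [hSdef, mem_Ioo] at hx1 hx2
        linarith [hx1.2, hx2.1]
      exact fun i j hij => hij.lt_or_gt.elim (fun h => hd _ _ h) (fun h => (hd _ _ h).symm)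
    have step2 : ∑' j : ℤ, ENNReal.ofReal ((C * β j) ^ r') * ENNReal.ofReal L
        ≤ ∫⁻ t in Ioi (0:ℝ), F t := by
      calc ∑' j : ℤ, ENNReal.ofReal ((C * β j) ^ r') * ENNReal.ofReal L
          ≤ ∑' j : ℤ, ∫⁻ t in S j, F t := ENNReal.tsum_le_tsum step1
        _ = ∫⁻ t in ⋃ j, S j, F t := (lintegral_iUnion (fun _ => measurableSet_Ioo) hdisj F).symm
        _ ≤ ∫⁻ t in Ioi (0:ℝ), F t := lintegral_mono_set
            (Set.iUnion_subset fun j => fun x hx => lt_trans (ha0 (j-1)) hx.1)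
    -- rewrite the tsum
    set T : ℝ≥0∞ := ∑' j : ℤ, ENNReal.ofReal (β j) ^ r' with hTdef
    have step3 : ∑' j : ℤ, ENNReal.ofReal ((C * β j) ^ r') * ENNReal.ofReal L
        = ENNReal.ofReal L * (ENNReal.ofReal (C ^ r') * T) := by
      rw [ENNReal.tsum_mul_right, mul_comm _ (ENNReal.ofReal L)]
      congr 1
      rw [hTdef, ← ENNReal.tsum_mul_left]
      congr 1
      funext j
      rw [Real.mul_rpow hC.le (hβ j), ENNReal.ofReal_mul (by positivity),
        ENNReal.ofReal_rpow_of_nonneg (hβ j) hr'.le]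
    rw [step3] at step2
    -- conclude
    have hmain : ENNReal.ofReal (r'/p) * (ENNReal.ofReal L * (ENNReal.ofReal (C ^ r') * T))
        ≤ ENNReal.ofReal (r'/p) * ∫⁻ t in Ioi (0:ℝ), F t := mul_le_mul_right step2 _
    refine le_trans (le_of_eq ?_) (ENNReal.rpow_le_rpow hmain (by positivity))
    -- ofReal (C*D) * T^(1/r') = (ofReal(r'/p) * (ofReal L * (ofReal (C^r') * T)))^(1/r')
    have hDr : D ^ r' = (r'/p) * L := by
      rw [hDdef, ← Real.rpow_mul (mul_pos (div_pos hr' hp) hL).le, one_div,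
        inv_mul_cancel₀ hr'.ne', Real.rpow_one]
    have e2 : ENNReal.ofReal (r'/p) * (ENNReal.ofReal L * (ENNReal.ofReal (C ^ r') * T))
        = ENNReal.ofReal ((C*D) ^ r') * T := by
      rw [Real.mul_rpow hC.le hD.le, hDr,
        ENNReal.ofReal_mul (Real.rpow_nonneg hC.le r'),
        ENNReal.ofReal_mul (div_pos hr' hp).le]
      ring
    rw [e2, ENNReal.mul_rpow_of_nonneg _ _ (by positivity : (0:ℝ) ≤ 1/r'),
      ENNReal.ofReal_rpow_of_nonneg (Real.rpow_nonneg (mul_pos hC hD).le r') (by positivity : (0:ℝ) ≤ 1/r'),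
      ← Real.rpow_mul (mul_pos hC hD).le, mul_one_div, div_self hr'.ne', Real.rpow_one]
end
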